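/- For any finite Coxeter group W, the sum over w ∈ W of the number of cosets |P(w)\W| equals the number of pairs (u,z) ∈ W × W such that there is no simple reflection s with both ℓ(us) > ℓ(u) and ℓ(sz) < ℓ(z). -/

import Mathlib

namespace CoxeterSystem

open List

open scoped Classical

variable {B W : Type*} [Group W] {M : CoxeterMatrix B} (cs : CoxeterSystem M W)

local prefix:100 "s" => cs.simple
local prefix:100 "π" => cs.wordProd
local prefix:100 "ℓ" => cs.length
local prefix:100 "ris" => cs.rightInvSeq

/-- The sign action of a simple reflection on `W × ℤˣ`. -/
noncomputable def eta (i : B) : W × ℤˣ → W × ℤˣ :=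
  fun p => (s i * p.1 * s i, if p.1 = s i then -p.2 else p.2)

lemma eta_mul_iff (i : B) (x : W) : s i * x * s i = s i ↔ x = s i := by
  constructor
  · intro h
    have h2 : s i * x * s i = s i * s i * s i := by
      rw [cs.simple_mul_simple_self, one_mul, h]
    exact mul_left_cancel (mul_right_cancel h2)
  · intro h
    rw [h, cs.simple_mul_simple_self, one_mul]

lemma eta_involutive (i : B) : Function.Involutive (cs.eta i) := by
  intro p
  unfold eta
  dsimp only
  by_cases hp : p.1 = s i
  · rw [if_pos hp, if_pos ((cs.eta_mul_iff i p.1).mpr hp)]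
    ext
    · dsimp only
      rw [← mul_assoc, ← mul_assoc, cs.simple_mul_simple_self, one_mul, mul_assoc,
        cs.simple_mul_simple_self, mul_one]
    · simp
  · rw [if_neg hp, if_neg (fun h => hp ((cs.eta_mul_iff i p.1).mp h))]
    ext
    · dsimp only
      rw [← mul_assoc, ← mul_assoc, cs.simple_mul_simple_self, one_mul, mul_assoc,
        cs.simple_mul_simple_self, mul_one]
    · rfl

/-- The sign action as a permutation. -/
noncomputable def etaPerm (i : B) : Equiv.Perm (W × ℤˣ) := (cs.eta_involutive i).toPerm

lemma etaPerm_apply (i : B) (p : W × ℤˣ) :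
    cs.etaPerm i p = (s i * p.1 * s i, if p.1 = s i then -p.2 else p.2) := rfl

lemma prod_map_etaPerm (ω : List B) (p : W × ℤˣ) :
    (List.prod (ω.map cs.etaPerm)) p
      = (π ω * p.1 * (π ω)⁻¹, (-1) ^ ((ris ω).count p.1) * p.2) := by
  induction ω generalizing p with
  | nil => simp
  | cons i ω ih =>
    rw [List.map_cons, List.prod_cons]
    have h1 : (cs.etaPerm i * List.prod (ω.map cs.etaPerm)) p
        = cs.etaPerm i ((List.prod (ω.map cs.etaPerm)) p) := rfl
    rw [h1, ih, etaPerm_apply]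
    dsimp only
    have hd : cs.rightInvSeq (i :: ω) = ((π ω)⁻¹ * (s i) * (π ω)) :: cs.rightInvSeq ω := rfl
    rw [hd, cs.wordProd_cons]
    have hiff : π ω * p.1 * (π ω)⁻¹ = s i ↔ p.1 = (π ω)⁻¹ * s i * π ω := by
      constructor
      · intro h
        have := congrArg (fun y => (π ω)⁻¹ * y * π ω) h
        group at this
        group
        exact this
      · intro h; rw [h]; group
    by_cases hp : p.1 = (π ω)⁻¹ * s i * π ω
    · rw [if_pos (hiff.mpr hp), hp, List.count_cons_self]
      refine Prod.ext ?_ ?_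
      · dsimp only
        rw [mul_inv_rev, cs.inv_simple]; group
      · dsimp only
        rw [pow_succ, mul_assoc, mul_assoc, neg_one_mul, mul_neg]
    · rw [if_neg (fun h => hp (hiff.mp h)),
        List.count_cons_of_ne (Ne.symm hp)]
      refine Prod.ext ?_ ?_
      · dsimp only
        rw [mul_inv_rev, cs.inv_simple]; group
      · rfl


lemma simple_pow_comm (i i' : B) (n : ℕ) :
    s i' * (s i * s i') ^ n = (s i' * s i) ^ n * s i' := by
  have h : SemiconjBy (s i') (s i * s i') (s i' * s i) := by
    unfold SemiconjBy
    rw [mul_assoc]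
  exact h.pow_right n

lemma pow_mul_pow_cancel (i i' : B) (a : ℕ) :
    (s i * s i') ^ a * (s i' * s i) ^ a = 1 := by
  have h : s i' * s i = (s i * s i')⁻¹ := by
    rw [mul_inv_rev, cs.inv_simple, cs.inv_simple]
  rw [h, inv_pow, mul_inv_cancel]

lemma alt_step (i i' : B) (k : ℕ) :
    π (alternatingWord i i' (k + 1))
      = π (alternatingWord i i' k) * ((s i' * s i) ^ k * s i') := by
  rcases Nat.even_or_odd k with he | ho
  · obtain ⟨a, rfl⟩ := he
    have h1 : ¬ Even (a + a + 1) := by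
      rw [Nat.even_add_one]
      simp [Nat.even_add]
    rw [cs.prod_alternatingWord_eq_mul_pow, cs.prod_alternatingWord_eq_mul_pow,
      if_neg h1, if_pos ⟨a, rfl⟩, one_mul,
      show (a + a) / 2 = a by omega, show (a + a + 1) / 2 = a by omega]
    rw [pow_add, ← mul_assoc, ← mul_assoc, cs.pow_mul_pow_cancel, one_mul,
      ← cs.simple_pow_comm]
  · obtain ⟨a, rfl⟩ := ho
    have h1 : ¬ Even (2 * a + 1) := by
      rw [Nat.even_add_one]
      simp
    have h2 : Even (2 * a + 1 + 1) := by
      rw [Nat.even_add_one]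
      exact h1
    rw [cs.prod_alternatingWord_eq_mul_pow, cs.prod_alternatingWord_eq_mul_pow,
      if_neg h1, if_pos h2, one_mul,
      show (2 * a + 1) / 2 = a by omega, show (2 * a + 1 + 1) / 2 = a + 1 by omega,
      show 2 * a + 1 = a + (a + 1) by omega]
    rw [pow_add (s i' * s i) a (a + 1)]
    simp only [← mul_assoc]
    rw [mul_assoc (s i') ((s i * s i') ^ a) ((s i' * s i) ^ a),
      cs.pow_mul_pow_cancel, mul_one, mul_assoc, ← cs.simple_pow_comm,
      cs.simple_mul_simple_cancel_left]

lemma ris_alt (i i' : B) (n : ℕ) :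
    ris (alternatingWord i i' n)
      = ((List.range n).reverse).map (fun k => (s i' * s i) ^ k * s i') := by
  induction n with
  | zero => rfl
  | succ n ih =>
    rw [alternatingWord_succ' i i' n]
    have hd : cs.rightInvSeq ((if Even n then i' else i) :: alternatingWord i i' n)
        = ((π (alternatingWord i i' n))⁻¹ * (s (if Even n then i' else i))
            * (π (alternatingWord i i' n))) :: cs.rightInvSeq (alternatingWord i i' n) := rfl
    rw [hd, ih]
    have hh : (π (alternatingWord i i' n))⁻¹ * (s (if Even n then i' else i))
        * (π (alternatingWord i i' n)) = (s i' * s i) ^ n * s i' := by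
      have : s (if Even n then i' else i) * π (alternatingWord i i' n)
          = π (alternatingWord i i' (n + 1)) := by
        rw [alternatingWord_succ' i i' n, cs.wordProd_cons]
      rw [mul_assoc, this, cs.alt_step i i' n, ← mul_assoc, inv_mul_cancel, one_mul]
    rw [hh, List.range_succ, List.reverse_append]
    simp

lemma count_even_alt (i i' : B) (t : W) :
    Even (((ris (alternatingWord i i' (2 * M i i'))).count t)) := by
  rw [cs.ris_alt, List.map_reverse, List.count_reverse]
  set f : ℕ → W := fun k => (s i' * s i) ^ k * s i' with hf
  have hper : ∀ k, f (M i i' + k) = f k := by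
    intro k
    simp only [hf]
    rw [pow_add, cs.simple_mul_simple_pow' i i', one_mul]
  have : (List.range (2 * M i i')).map f
      = (List.range (M i i')).map f ++ (List.range (M i i')).map f := by
    rw [two_mul, List.range_add, List.map_append, List.map_map]
    congr 1
    apply List.map_congr_left
    intro k _
    exact hper k
  rw [this, List.count_append]
  exact ⟨_, rfl⟩

lemma prod_map_alt_even {G : Type*} [Monoid G] (g : B → G) (i i' : B) (c : ℕ) :
    ((alternatingWord i i' (2 * c)).map g).prod = (g i * g i') ^ c := by
  induction c with
  | zero => simp [show alternatingWord i i' 0 = [] from rfl]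
  | succ c ih =>
    have h1 : 2 * (c + 1) = (2 * c + 1) + 1 := by omega
    rw [h1, alternatingWord_succ' i i' (2 * c + 1), alternatingWord_succ' i i' (2 * c)]
    rw [if_neg (by rw [Nat.even_add_one]; simp), if_pos (by simp)]
    rw [List.map_cons, List.map_cons, List.prod_cons, List.prod_cons, ih]
    rw [pow_succ', ← mul_assoc]

lemma etaPerm_liftable : M.IsLiftable cs.etaPerm := by
  intro i i'
  have h := prod_map_alt_even cs.etaPerm i i' (M i i')
  rw [← h]
  refine Equiv.ext fun p => ?_
  rw [cs.prod_map_etaPerm]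
  have h1 : π (alternatingWord i i' (2 * M i i')) = 1 := by
    rw [cs.prod_alternatingWord_eq_mul_pow, if_pos ⟨M i i', by omega⟩,
      show 2 * M i i' / 2 = M i i' by omega, one_mul, cs.simple_mul_simple_pow]
  rw [h1]
  simp [Prod.ext_iff, Even.neg_one_pow (cs.count_even_alt i i' p.1)]
/-- The sign representation of the Coxeter group. -/
noncomputable def rho : W →* Equiv.Perm (W × ℤˣ) := cs.lift ⟨cs.etaPerm, cs.etaPerm_liftable⟩

lemma rho_simple (i : B) : cs.rho (s i) = cs.etaPerm i :=
  cs.lift_apply_simple cs.etaPerm_liftable i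

lemma rho_wordProd (ω : List B) : cs.rho (π ω) = (ω.map cs.etaPerm).prod := by
  induction ω with
  | nil => simp [cs.wordProd_nil]
  | cons i ω ih =>
    rw [cs.wordProd_cons, map_mul, ih, List.map_cons, List.prod_cons, cs.rho_simple]

lemma rho_apply (w t : W) (ε : ℤˣ) :
    cs.rho w (t, ε) = (w * t * w⁻¹, (cs.rho w (t, 1)).2 * ε) := by
  obtain ⟨ω, rfl⟩ := cs.wordProd_surjective w
  rw [cs.rho_wordProd, cs.prod_map_etaPerm, cs.prod_map_etaPerm]
  simp

lemma sgn_eq {ω ω' : List B} (h : π ω = π ω') (t : W) :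
    ((-1 : ℤˣ)) ^ ((ris ω).count t) = (-1) ^ ((ris ω').count t) := by
  have h1 := cs.prod_map_etaPerm ω (t, 1)
  have h2 := cs.prod_map_etaPerm ω' (t, 1)
  rw [← cs.rho_wordProd] at h1 h2
  rw [h] at h1
  have h3 := congrArg Prod.snd (h1.symm.trans h2)
  simpa using h3

lemma rho_isReflection {t : W} (ht : cs.IsReflection t) : cs.rho t (t, (1 : ℤˣ)) = (t, -1) := by
  obtain ⟨w, i, rfl⟩ := ht
  set d : ℤˣ := (cs.rho w (s i, 1)).2 with hd
  set c : ℤˣ := (cs.rho w⁻¹ (w * s i * w⁻¹, 1)).2 with hc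
  have h1 : cs.rho w⁻¹ (w * s i * w⁻¹, 1) = (s i, c) := by
    rw [cs.rho_apply]
    refine Prod.ext ?_ ?_
    · dsimp only; group
    · dsimp only; rw [mul_one, hc]
  have h2 : cs.rho (s i) (s i, c) = (s i, -c) := by
    rw [cs.rho_simple, cs.etaPerm_apply]
    refine Prod.ext ?_ ?_
    · dsimp only; rw [cs.simple_mul_simple_self, one_mul]
    · dsimp only; rw [if_pos rfl]
  have h4 : cs.rho w (s i, c) = (w * s i * w⁻¹, d * c) := by rw [cs.rho_apply, hd]
  have h3 : cs.rho w (s i, -c) = (w * s i * w⁻¹, d * (-c)) := by rw [cs.rho_apply, hd]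
  have h5 : d * c = 1 := by
    have hww : cs.rho w * cs.rho w⁻¹ = 1 := by
      rw [← map_mul, mul_inv_cancel, map_one]
    have h6 : cs.rho w (cs.rho w⁻¹ (w * s i * w⁻¹, 1)) = (w * s i * w⁻¹, 1) := by
      calc cs.rho w (cs.rho w⁻¹ (w * s i * w⁻¹, 1))
          = (cs.rho w * cs.rho w⁻¹) (w * s i * w⁻¹, 1) := rfl
        _ = (w * s i * w⁻¹, 1) := by rw [hww]; rfl
    rw [h1, h4] at h6
    exact (Prod.ext_iff.mp h6).2
  have hfin : cs.rho (w * s i * w⁻¹) (w * s i * w⁻¹, 1)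
      = cs.rho w (cs.rho (s i) (cs.rho w⁻¹ (w * s i * w⁻¹, 1))) := by
    rw [map_mul, map_mul]; rfl
  rw [hfin, h1, h2, h3]
  refine Prod.ext rfl ?_
  dsimp only
  rw [mul_neg, h5]

lemma ris_append (ω ω' : List B) :
    ris (ω ++ ω') = (ris ω).map (fun x => (π ω')⁻¹ * x * (π ω')) ++ ris ω' := by
  induction ω with
  | nil => simp
  | cons i ω ih =>
    have hd : cs.rightInvSeq ((i :: ω) ++ ω')
        = ((π (ω ++ ω'))⁻¹ * (s i) * (π (ω ++ ω'))) :: cs.rightInvSeq (ω ++ ω') := rfl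
    have hd2 : cs.rightInvSeq (i :: ω) = ((π ω)⁻¹ * (s i) * (π ω)) :: cs.rightInvSeq ω := rfl
    rw [hd, ih, hd2, List.map_cons, List.cons_append]
    congr 1
    rw [cs.wordProd_append, mul_inv_rev]
    group

lemma mem_ris_of_isRightInversion {ω : List B} (hω : cs.IsReduced ω) {t : W}
    (ht : cs.IsReflection t) (hl : ℓ (π ω * t) < ℓ (π ω)) : t ∈ ris ω := by
  by_contra hmem
  have hc0 : (ris ω).count t = 0 := List.count_eq_zero.mpr hmem
  obtain ⟨κ, hκred, hκ⟩ := cs.exists_reduced_word' (π ω * t)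
  obtain ⟨τ, hτ⟩ := cs.wordProd_surjective t
  have hπ : π (κ ++ τ) = π ω := by
    rw [cs.wordProd_append, ← hκ, hτ, mul_assoc]
    rw [← hτ] at ht ⊢
    rw [ht.mul_self, mul_one]
  have hsgn := cs.sgn_eq hπ t
  rw [hc0, pow_zero] at hsgn
  rw [cs.ris_append, List.count_append] at hsgn
  have hconj : ∀ x : W, (π τ)⁻¹ * x * (π τ) = t⁻¹ * x * t := by intro x; rw [hτ]
  have hmapcount : ((ris κ).map (fun x => (π τ)⁻¹ * x * (π τ))).count t = (ris κ).count t := by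
    have hinj : Function.Injective (fun x : W => (π τ)⁻¹ * x * (π τ)) := by
      intro a b hab
      dsimp only at hab
      exact mul_left_cancel (mul_right_cancel hab)
    have himg : (fun x : W => (π τ)⁻¹ * x * (π τ)) t = t := by
      dsimp only
      rw [hτ, ht.inv, ht.mul_self, one_mul]
    conv_lhs => rw [← himg]
    exact List.count_map_of_injective _ _ hinj t
  have hτcount : ((-1 : ℤˣ)) ^ ((ris τ).count t) = -1 := by
    have h1 := cs.prod_map_etaPerm τ (t, 1)
    rw [← cs.rho_wordProd, hτ, cs.rho_isReflection ht] at h1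
    have := congrArg Prod.snd h1
    simpa using this.symm
  rw [hmapcount, pow_add, hτcount, mul_neg_one] at hsgn
  have hpos : (ris κ).count t ≠ 0 := by
    intro h0
    rw [h0, pow_zero] at hsgn
    exact absurd hsgn.symm (by decide)
  have hmemκ : t ∈ ris κ := List.count_pos_iff.mp (Nat.pos_of_ne_zero hpos)
  have hinv := cs.isRightInversion_of_mem_rightInvSeq hκred hmemκ
  rw [← hκ] at hinv
  have h7 : ℓ (π ω * t * t) < ℓ (π ω * t) := hinv.2
  rw [mul_assoc, ht.mul_self, mul_one] at h7
  exact absurd h7 (Nat.lt_asymm hl)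

lemma exists_eraseIdx_of_simple_descent {ω : List B} (hω : cs.IsReduced ω) {i : B}
    (hl : ℓ (s i * π ω) < ℓ (π ω)) :
    ∃ j, j < ω.length ∧ s i * π ω = π (ω.eraseIdx j) := by
  have hrev : cs.IsReduced ω.reverse := (cs.isReduced_reverse_iff ω).mpr hω
  have hπrev : π ω.reverse = (π ω)⁻¹ := cs.wordProd_reverse ω
  have hlen : ℓ (π ω.reverse * s i) < ℓ (π ω.reverse) := by
    rw [hπrev]
    have h1 : (π ω)⁻¹ * s i = (s i * π ω)⁻¹ := by
      rw [mul_inv_rev, cs.inv_simple]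
    rw [h1, cs.length_inv, cs.length_inv]
    exact hl
  have hmem := cs.mem_ris_of_isRightInversion hrev (cs.isReflection_simple i) hlen
  rw [cs.rightInvSeq_reverse, List.mem_reverse] at hmem
  obtain ⟨j, hj, hji⟩ := List.mem_iff_getElem.mp hmem
  rw [cs.length_leftInvSeq] at hj
  refine ⟨j, hj, ?_⟩
  have := cs.getD_leftInvSeq_mul_wordProd ω j
  rw [List.getD_eq_getElem _ 1 (by rw [cs.length_leftInvSeq]; exact hj), hji] at this
  exact this

lemma simple_mem_closure {J : Set B} {i : B} (hi : i ∈ J) :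
    s i ∈ Subgroup.closure (cs.simple '' J) :=
  Subgroup.subset_closure ⟨i, hi, rfl⟩

lemma wordProd_mem_closure {J : Set B} {ω : List B} (hω : ∀ i ∈ ω, i ∈ J) :
    π ω ∈ Subgroup.closure (cs.simple '' J) := by
  induction ω with
  | nil => rw [cs.wordProd_nil]; exact one_mem _
  | cons i τ ih =>
    rw [cs.wordProd_cons]
    exact mul_mem (cs.simple_mem_closure (hω i List.mem_cons_self))
      (ih fun j hj => hω j (List.mem_cons_of_mem i hj))

lemma exists_word_of_mem_closure {J : Set B} {p : W}
    (hp : p ∈ Subgroup.closure (cs.simple '' J)) :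
    ∃ ω : List B, (∀ i ∈ ω, i ∈ J) ∧ π ω = p := by
  induction hp using Subgroup.closure_induction with
  | mem x hx =>
    obtain ⟨i, hi, rfl⟩ := hx
    exact ⟨[i], by simpa using hi, cs.wordProd_singleton i⟩
  | one => exact ⟨[], by simp, cs.wordProd_nil⟩
  | mul x y hx hy ihx ihy =>
    obtain ⟨ω₁, h₁, rfl⟩ := ihx
    obtain ⟨ω₂, h₂, rfl⟩ := ihy
    exact ⟨ω₁ ++ ω₂, fun i hi => (List.mem_append.mp hi).elim (h₁ i) (h₂ i),
      cs.wordProd_append ω₁ ω₂⟩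
  | inv x hx ih =>
    obtain ⟨ω, h, rfl⟩ := ih
    exact ⟨ω.reverse, fun i hi => h i (List.mem_reverse.mp hi), cs.wordProd_reverse ω⟩

lemma min_coset_mul_length {J : Set B} {z : W}
    (hz : ∀ p ∈ Subgroup.closure (cs.simple '' J), ℓ z ≤ ℓ (p * z)) :
    ∀ (n : ℕ) (ω : List B), ω.length ≤ n → (∀ i ∈ ω, i ∈ J) →
      ∃ ω' : List B, (∀ i ∈ ω', i ∈ J) ∧ ω'.length ≤ ω.length ∧ π ω' = π ω ∧
        ℓ (π ω * z) = ω'.length + ℓ z := by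
  intro n
  induction n with
  | zero =>
    intro ω hlen _
    rw [Nat.le_zero, List.length_eq_zero_iff] at hlen
    subst hlen
    exact ⟨[], by simp, by simp, rfl, by simp⟩
  | succ n ih =>
    intro ω hlen hJ
    match ω with
    | [] => exact ⟨[], by simp, by simp, rfl, by simp⟩
    | i :: τ =>
      have hiJ : i ∈ J := hJ i List.mem_cons_self
      have hlen' : τ.length ≤ n := by simp only [List.length_cons] at hlen; omega
      obtain ⟨τ', hτ'J, hτ'lenle, hτ'π, hτ'len⟩ := ih τ hlen'
        (fun j hj => hJ j (List.mem_cons_of_mem i hj))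
      obtain ⟨ζ, hζred, hζ⟩ := cs.exists_reduced_word' z
      have hζlen : ℓ z = ζ.length := by rw [hζ]; exact hζred
      set κ := τ' ++ ζ with hκ
      have hκπ : π κ = π τ * z := by rw [hκ, cs.wordProd_append, hτ'π, ← hζ]
      have hκred : cs.IsReduced κ := by
        show ℓ (π κ) = κ.length
        rw [hκπ, hτ'len, List.length_append, ← hζlen]
      rcases cs.length_simple_mul (π κ) i with hup | hdown
      · refine ⟨i :: τ', fun j hj => ?_, by simpa using hτ'lenle, ?_, ?_⟩
        · rcases List.mem_cons.mp hj with rfl | hj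
          · exact hiJ
          · exact hτ'J j hj
        · rw [cs.wordProd_cons, cs.wordProd_cons, hτ'π]
        · rw [cs.wordProd_cons, mul_assoc, ← hκπ, hup, hκπ, hτ'len]
          simp only [List.length_cons]
          omega
      · have hdesc : ℓ (s i * π κ) < ℓ (π κ) := by omega
        obtain ⟨j, hj, herase⟩ := cs.exists_eraseIdx_of_simple_descent hκred hdesc
        by_cases hjτ : j < τ'.length
        · have he : κ.eraseIdx j = τ'.eraseIdx j ++ ζ := List.eraseIdx_append_of_lt_length hjτ _
          have hkey : s i * π τ' = π (τ'.eraseIdx j) := by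
            have h2 : s i * (π τ' * z) = π (τ'.eraseIdx j) * z := by
              rw [hζ]
              calc s i * (π τ' * π ζ) = s i * π κ := by rw [hκ, cs.wordProd_append]
                _ = π (κ.eraseIdx j) := herase
                _ = π (τ'.eraseIdx j) * π ζ := by rw [he, cs.wordProd_append]
            rw [← mul_assoc] at h2
            exact mul_right_cancel h2
          obtain ⟨ω', hω'J, hω'le, hω'π, hω'len⟩ := ih (τ'.eraseIdx j)
            (by
              have := List.length_eraseIdx_add_one hjτ
              omega)
            (fun a ha => hτ'J a (List.mem_of_mem_eraseIdx ha))
          refine ⟨ω', hω'J, ?_, ?_, ?_⟩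
          · have := List.length_eraseIdx_add_one hjτ
            simp only [List.length_cons]
            omega
          · rw [hω'π, ← hkey, cs.wordProd_cons, hτ'π]
          · rw [cs.wordProd_cons, mul_assoc, ← hκπ]
            rw [hκπ, ← hτ'π, ← mul_assoc, hkey, ← hω'π] at hdesc ⊢
            have h5 : ℓ (π ω' * z) = ω'.length + ℓ z := by
              rw [hω'π]
              exact hω'len
            exact h5
        · push_neg at hjτ
          exfalso
          have he : κ.eraseIdx j = τ' ++ ζ.eraseIdx (j - τ'.length) :=
            List.eraseIdx_append_of_length_le hjτ _
          set z₁ := π (ζ.eraseIdx (j - τ'.length)) with hz₁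
          have h2 : s i * (π τ' * z) = π τ' * z₁ := by
            rw [hζ]
            calc s i * (π τ' * π ζ) = s i * π κ := by rw [hκ, cs.wordProd_append]
              _ = π (κ.eraseIdx j) := herase
              _ = π τ' * z₁ := by rw [he, cs.wordProd_append, ← hz₁]
          have hp : (π τ')⁻¹ * s i * π τ' ∈ Subgroup.closure (cs.simple '' J) := by
            refine mul_mem (mul_mem (inv_mem ?_) (cs.simple_mem_closure hiJ)) ?_
            · exact cs.wordProd_mem_closure hτ'J
            · exact cs.wordProd_mem_closure hτ'J
          have h3 : ((π τ')⁻¹ * s i * π τ') * z = z₁ := by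
            rw [mul_assoc, mul_assoc, h2, inv_mul_cancel_left]
          have h4 := hz _ hp
          rw [h3] at h4
          have h5 : ℓ z₁ ≤ (ζ.eraseIdx (j - τ'.length)).length := cs.length_wordProd_le _
          have h6 : j - τ'.length < ζ.length := by
            have h8 : κ.length = τ'.length + ζ.length := by rw [hκ, List.length_append]
            omega
          have h7 := List.length_eraseIdx_add_one h6
          omega

lemma exists_min_coset (J : Set B) (g : W) :
    ∃ q ∈ Subgroup.closure (cs.simple '' J), ∀ p ∈ Subgroup.closure (cs.simple '' J),
      ℓ (q * g) ≤ ℓ (p * g) := by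
  set S : Set ℕ := {n | ∃ p ∈ Subgroup.closure (cs.simple '' J), ℓ (p * g) = n} with hS
  have hne : S.Nonempty := ⟨ℓ ((1 : W) * g), 1, one_mem _, rfl⟩
  obtain ⟨q, hq, hqlen⟩ := Nat.sInf_mem hne
  refine ⟨q, hq, fun p hp => ?_⟩
  rw [hqlen]
  exact Nat.sInf_le ⟨p, hp, rfl⟩

lemma min_unique {J : Set B} {z₀ : W}
    (hz₀ : ∀ p ∈ Subgroup.closure (cs.simple '' J), ℓ z₀ ≤ ℓ (p * z₀))
    {p : W} (hp : p ∈ Subgroup.closure (cs.simple '' J))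
    (hcond : ∀ i ∈ J, ℓ (p * z₀) < ℓ (s i * (p * z₀))) : p = 1 := by
  obtain ⟨ω, hωJ, hωπ⟩ := cs.exists_word_of_mem_closure hp
  obtain ⟨ω', hω'J, _, hω'π, hω'len⟩ := cs.min_coset_mul_length hz₀ ω.length ω le_rfl hωJ
  match ω', hω'J, hω'π, hω'len with
  | [], _, hπ, _ =>
    rw [← hωπ, ← hπ, cs.wordProd_nil]
  | a :: rest, hJ', hπ, hlen =>
    exfalso
    have haJ : a ∈ J := hJ' a List.mem_cons_self
    have hcond' := hcond a haJ
    have hps : s a * (p * z₀) = π rest * z₀ := by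
      rw [← hωπ, ← hπ, cs.wordProd_cons, mul_assoc, cs.simple_mul_simple_cancel_left]
    have hub : ℓ (π rest * z₀) ≤ rest.length + ℓ z₀ := by
      calc ℓ (π rest * z₀) ≤ ℓ (π rest) + ℓ z₀ := cs.length_mul_le _ _
        _ ≤ rest.length + ℓ z₀ := by
            have := cs.length_wordProd_le rest
            omega
    have hlen2 : ℓ (p * z₀) = rest.length + 1 + ℓ z₀ := by
      rw [← hωπ, hlen]
      simp only [List.length_cons]
    rw [hps] at hcond'
    omega

lemma index_closure_eq (J : Set B) :
    (Subgroup.closure (cs.simple '' J)).index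
      = Nat.card {z : W // ∀ i, i ∈ J → ℓ z < ℓ (s i * z)} := by
  set P := Subgroup.closure (cs.simple '' J) with hP
  have key : Function.Bijective
      (fun z : {z : W // ∀ i, i ∈ J → ℓ z < ℓ (s i * z)} =>
        (Quotient.mk'' z.val : Quotient (QuotientGroup.rightRel P))) := by
    constructor
    · rintro ⟨z, hz⟩ ⟨z', hz'⟩ hq
      have hrel : z' * z⁻¹ ∈ P := by
        rw [← QuotientGroup.rightRel_apply]
        exact Quotient.eq''.mp hq
      obtain ⟨q, hqP, hqmin⟩ := cs.exists_min_coset J z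
      set z₀ := q * z with hz₀
      have hz₀min : ∀ p ∈ P, ℓ z₀ ≤ ℓ (p * z₀) := by
        intro p hp
        rw [hz₀, ← mul_assoc]
        exact hqmin (p * q) (mul_mem hp hqP)
      have hzz₀ : z = q⁻¹ * z₀ := by rw [hz₀]; group
      have hq1 : q⁻¹ = (1 : W) := by
        refine cs.min_unique hz₀min (inv_mem hqP) ?_
        intro i hi
        rw [← hzz₀]
        exact hz i hi
      have hz₀z : z = z₀ := by rw [hzz₀, hq1, one_mul]
      have hp1 : z' * z⁻¹ = (1 : W) := by
        refine cs.min_unique hz₀min hrel ?_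
        intro i hi
        have : z' * z⁻¹ * z₀ = z' := by rw [← hz₀z]; group
        rw [this]
        exact hz' i hi
      have : z' = z := by
        have := congrArg (fun x => x * z) hp1
        simpa [mul_assoc] using this
      exact Subtype.ext this.symm
    · intro x
      induction x using Quotient.inductionOn' with
      | h g =>
        obtain ⟨q, hqP, hqmin⟩ := cs.exists_min_coset J g
        have hz₀min : ∀ p ∈ P, ℓ (q * g) ≤ ℓ (p * (q * g)) := by
          intro p hp
          rw [← mul_assoc]
          exact hqmin (p * q) (mul_mem hp hqP)
        have hcond : ∀ i, i ∈ J → ℓ (q * g) < ℓ (s i * (q * g)) := by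
          intro i hi
          have h1 := hz₀min (s i) (cs.simple_mem_closure hi)
          have h2 := cs.length_simple_mul_ne (q * g) i
          omega
        refine ⟨⟨q * g, hcond⟩, ?_⟩
        apply Quotient.eq''.mpr
        rw [QuotientGroup.rightRel_apply]
        have : g * (q * g)⁻¹ = q⁻¹ := by group
        rw [this]
        exact inv_mem hqP
  rw [Subgroup.index, ← Nat.card_congr
    (QuotientGroup.quotientRightRelEquivQuotientLeftRel P)]
  exact (Nat.card_congr (Equiv.ofBijective _ key)).symm

end CoxeterSystem

/-- For a finite Coxeter system `(W,S)`, `∑_{w ∈ W} |P(w)\W|` (where `P(w)` is the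
standard parabolic subgroup generated by the simple reflections `s` with
`ℓ(ws) > ℓ(w)`, and the number of right cosets of `P(w)` in `W` is its index)
equals the number of pairs `(u,z) ∈ W × W` such that there is no simple reflection
`s` with both `ℓ(us) > ℓ(u)` and `ℓ(sz) < ℓ(z)`. -/
theorem sum_index_parabolic_eq_card_pairs
    {B W : Type*} [Group W] {M : CoxeterMatrix B} (cs : CoxeterSystem M W)
    [Fintype W] :
    ∑ w : W, (Subgroup.closure
        {x | ∃ i : B, x = cs.simple i ∧ cs.length w < cs.length (w * cs.simple i)}).index =
      Nat.card {p : W × W //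
        ¬ ∃ i : B, cs.length p.1 < cs.length (p.1 * cs.simple i) ∧
          cs.length (cs.simple i * p.2) < cs.length p.2} := by
  classical
  set A : W → W → Prop := fun w z => ∀ i, i ∈ {i : B | cs.length w < cs.length (w * cs.simple i)}
      → cs.length z < cs.length (cs.simple i * z) with hA
  have hset : ∀ w : W,
      {x | ∃ i : B, x = cs.simple i ∧ cs.length w < cs.length (w * cs.simple i)}
        = cs.simple '' {i : B | cs.length w < cs.length (w * cs.simple i)} := by
    intro w
    ext x
    constructor
    · rintro ⟨i, rfl, h⟩; exact ⟨i, h, rfl⟩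
    · rintro ⟨i, h, rfl⟩; exact ⟨i, rfl, h⟩
  have hcond : ∀ p : W × W, A p.1 p.2 ↔
      ¬ ∃ i : B, cs.length p.1 < cs.length (p.1 * cs.simple i) ∧
        cs.length (cs.simple i * p.2) < cs.length p.2 := by
    rintro ⟨w, z⟩
    dsimp only
    rw [hA, not_exists]
    refine forall_congr' fun i => ?_
    have hne := cs.length_simple_mul_ne z i
    constructor
    · intro h hcon
      have := h hcon.1
      omega
    · intro h hQ
      have h2 : ¬ (cs.length w < cs.length (w * cs.simple i) ∧
          cs.length (cs.simple i * z) < cs.length z) := h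
      by_contra hlt
      exact h2 ⟨hQ, by omega⟩
  have e : (Σ w : W, {z : W // A w z}) ≃ {p : W × W //
      ¬ ∃ i : B, cs.length p.1 < cs.length (p.1 * cs.simple i) ∧
        cs.length (cs.simple i * p.2) < cs.length p.2} :=
    (Equiv.subtypeProdEquivSigmaSubtype A).symm.trans (Equiv.subtypeEquivRight hcond)
  calc ∑ w : W, (Subgroup.closure
        {x | ∃ i : B, x = cs.simple i ∧ cs.length w < cs.length (w * cs.simple i)}).index
      = ∑ w : W, Nat.card {z : W // A w z} := by
        refine Finset.sum_congr rfl fun w _ => ?_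
        rw [hset w, cs.index_closure_eq]
    _ = ∑ w : W, Fintype.card {z : W // A w z} := by
        refine Finset.sum_congr rfl fun w _ => ?_
        exact Nat.card_eq_fintype_card
    _ = Fintype.card (Σ w : W, {z : W // A w z}) := (Fintype.card_sigma).symm
    _ = Nat.card (Σ w : W, {z : W // A w z}) := Nat.card_eq_fintype_card.symm
    _ = _ := Nat.card_congr e
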